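/- arXiv:2003.08022 — 8 statements merged into one kernel-verified Lean document; each statement's English description precedes it below -/
import Mathlib

section
/- Let k ≥ 1. Suppose t ↦ z(t) = (x(t),u_k(t),…,u_1(t),y(t),p_x(t),p_k(t),…,p_1(t),p_y(t)) is a differentiable curve in ℝ^{2(k+2)} solving Hamilton's equations for H (i.e. the time derivative of each configuration coordinate equals the partial derivative of H with respect to its conjugate momentum, and the time derivative of each momentum equals minus the partial derivative of H with respect to its conjugate coordinate). Then x'(t) = P_1(z(t)), u_k'(t) = P_2(z(t)), and the functions Q_i(t) := P_i(z(t)), i = 1,…,k+2, satisfy Q_1' = Q_3 Q_2, Q_i' = −Q_1 Q_{i+1} for 2 ≤ i ≤ k+1, and Q_{k+2}' = 0. -/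
noncomputable def powerFn (k : ℕ) (a : Fin (k + 2))
    (z : (Fin (k + 2) → ℝ) × (Fin (k + 2) → ℝ)) : ℝ :=
  if a = ⟨0, by omega⟩ then
    z.2 ⟨0, by omega⟩ + ∑ j : Fin k, z.1 ⟨j.1 + 1, by omega⟩ * z.2 ⟨j.1 + 2, by omega⟩
  else z.2 a

noncomputable def jetHam (k : ℕ) (z : (Fin (k + 2) → ℝ) × (Fin (k + 2) → ℝ)) : ℝ :=
  (1 / 2) * (powerFn k ⟨0, by omega⟩ z ^ 2 + powerFn k ⟨1, by omega⟩ z ^ 2)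

namespace JetAux

variable {k : ℕ}

abbrev E (k : ℕ) := (Fin (k + 2) → ℝ) × (Fin (k + 2) → ℝ)

noncomputable def π1 (i : Fin (k+2)) : E k →L[ℝ] ℝ :=
  (ContinuousLinearMap.proj i).comp (ContinuousLinearMap.fst ℝ _ _)

noncomputable def π2 (i : Fin (k+2)) : E k →L[ℝ] ℝ :=
  (ContinuousLinearMap.proj i).comp (ContinuousLinearMap.snd ℝ _ _)

@[simp] lemma π1_apply (i : Fin (k+2)) (v : E k) : π1 i v = v.1 i := rfl
@[simp] lemma π2_apply (i : Fin (k+2)) (v : E k) : π2 i v = v.2 i := rfl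

/-- `P1` as a plain function. -/
noncomputable def P1 (k : ℕ) (w : E k) : ℝ :=
  w.2 ⟨0, by omega⟩ + ∑ j : Fin k, w.1 ⟨j.1 + 1, by omega⟩ * w.2 ⟨j.1 + 2, by omega⟩

lemma powerFn_zero (w : E k) : powerFn k ⟨0, by omega⟩ w = P1 k w := by
  simp [powerFn, P1]

lemma powerFn_ne (a : Fin (k+2)) (ha : a ≠ ⟨0, by omega⟩) (w : E k) :
    powerFn k a w = w.2 a := by rw [powerFn, if_neg ha]

noncomputable def dP1 (k : ℕ) (w : E k) : E k →L[ℝ] ℝ :=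
  π2 ⟨0, by omega⟩ + ∑ j : Fin k,
    (w.1 ⟨j.1 + 1, by omega⟩ • π2 ⟨j.1 + 2, by omega⟩
      + w.2 ⟨j.1 + 2, by omega⟩ • π1 ⟨j.1 + 1, by omega⟩)

lemma hasFDerivAt_P1 (w : E k) : HasFDerivAt (P1 k) (dP1 k w) w := by
  have h0 : HasFDerivAt (fun v : E k => v.2 ⟨0, by omega⟩)
      (π2 (k := k) ⟨0, by omega⟩) w := (π2 _).hasFDerivAt
  have hj : ∀ j : Fin k, HasFDerivAt
      (fun v : E k => v.1 ⟨j.1 + 1, by omega⟩ * v.2 ⟨j.1 + 2, by omega⟩)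
      (w.1 ⟨j.1 + 1, by omega⟩ • π2 ⟨j.1 + 2, by omega⟩
        + w.2 ⟨j.1 + 2, by omega⟩ • π1 ⟨j.1 + 1, by omega⟩) w := fun j =>
    ((π1 (k := k) ⟨j.1 + 1, by omega⟩).hasFDerivAt (x := w)).mul
      ((π2 (k := k) ⟨j.1 + 2, by omega⟩).hasFDerivAt (x := w))
  exact h0.add (HasFDerivAt.fun_sum fun j _ => hj j)

lemma hasFDerivAt_jetHam (w : E k) :
    HasFDerivAt (jetHam k)
      (P1 k w • dP1 k w + w.2 ⟨1, by omega⟩ • π2 ⟨1, by omega⟩) w := by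
  have h1 : (⟨1, by omega⟩ : Fin (k+2)) ≠ ⟨0, by omega⟩ := by
    simp [Fin.ext_iff]
  have hfun : jetHam k = fun v : E k =>
      (1/2 : ℝ) * (P1 k v * P1 k v + v.2 ⟨1, by omega⟩ * v.2 ⟨1, by omega⟩) := by
    funext v
    rw [jetHam, powerFn_zero, powerFn_ne _ h1]
    ring
  rw [hfun]
  have hP1 := hasFDerivAt_P1 (k := k) w
  have hP2 : HasFDerivAt (fun v : E k => v.2 ⟨1, by omega⟩)
      (π2 (k := k) ⟨1, by omega⟩) w := (π2 _).hasFDerivAt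
  have := (((hP1.mul hP1).add (hP2.mul hP2)).const_mul (1/2 : ℝ))
  have heq : (P1 k w • dP1 k w + w.2 ⟨1, by omega⟩ • π2 ⟨1, by omega⟩ : E k →L[ℝ] ℝ)
      = (1/2 : ℝ) • (P1 k w • dP1 k w + P1 k w • dP1 k w
        + (w.2 ⟨1, by omega⟩ • π2 ⟨1, by omega⟩ + w.2 ⟨1, by omega⟩ • π2 ⟨1, by omega⟩)) :=
    ContinuousLinearMap.ext fun v => by
      simp only [ContinuousLinearMap.add_apply, ContinuousLinearMap.smul_apply,
        smul_eq_mul]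
      ring
  rw [heq]
  exact this

end JetAux

namespace JetAux

variable {k : ℕ}

lemma fderiv_jetHam_apply (w v : E k) :
    fderiv ℝ (jetHam k) w v
      = P1 k w * (v.2 ⟨0, by omega⟩
          + ∑ j : Fin k, (w.1 ⟨j.1 + 1, by omega⟩ * v.2 ⟨j.1 + 2, by omega⟩
              + w.2 ⟨j.1 + 2, by omega⟩ * v.1 ⟨j.1 + 1, by omega⟩))
        + w.2 ⟨1, by omega⟩ * v.2 ⟨1, by omega⟩ := by
  rw [(hasFDerivAt_jetHam w).fderiv]
  simp only [ContinuousLinearMap.add_apply, ContinuousLinearMap.smul_apply,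
    ContinuousLinearMap.sum_apply, π1_apply, π2_apply, dP1, smul_eq_mul]

lemma fderiv_config_dir (w : E k) (i : Fin (k+2)) :
    fderiv ℝ (jetHam k) w ((0 : Fin (k+2) → ℝ), Pi.single i 1)
      = (if i.1 = 0 then P1 k w else 0) + (if i.1 = 1 then w.2 ⟨1, by omega⟩ else 0)
        + (if 2 ≤ i.1 then P1 k w * w.1 ⟨i.1 - 1, by omega⟩ else 0) := by
  rw [fderiv_jetHam_apply]
  simp only [Pi.single_apply, Pi.zero_apply, mul_zero, add_zero, mul_ite, mul_one]
  rcases Nat.lt_or_ge i.1 2 with h2 | h2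
  · have hsum : ∑ j : Fin k, (if (⟨j.1 + 2, by omega⟩ : Fin (k+2)) = i
        then w.1 ⟨j.1 + 1, by omega⟩ else 0) = 0 := by
      refine Finset.sum_eq_zero fun j _ => ?_
      rw [if_neg (by simp only [Fin.ext_iff]; omega)]
    rw [hsum, add_zero]
    rcases Nat.lt_or_ge i.1 1 with h1 | h1
    · have hi0 : i.1 = 0 := by omega
      have : (⟨0, by omega⟩ : Fin (k+2)) = i := by simp [Fin.ext_iff]; omega
      rw [if_pos this, if_neg (by simp [Fin.ext_iff]; omega), if_pos hi0,
        if_neg (by omega), if_neg (by omega)]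
      ring
    · have hi1 : i.1 = 1 := by omega
      rw [if_neg (by simp [Fin.ext_iff]; omega), if_pos (by simp [Fin.ext_iff]; omega),
        if_neg (by omega), if_pos hi1, if_neg (by omega)]
      ring
  · have hik : i.1 ≤ k + 1 := by omega
    have hj : ∀ j : Fin k, ((⟨j.1 + 2, by omega⟩ : Fin (k+2)) = i) ↔ j = ⟨i.1 - 2, by omega⟩ := by
      intro j; simp only [Fin.ext_iff]; omega
    have hsum : ∑ j : Fin k, (if (⟨j.1 + 2, by omega⟩ : Fin (k+2)) = i
        then w.1 ⟨j.1 + 1, by omega⟩ else 0) = w.1 ⟨i.1 - 1, by omega⟩ := by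
      simp only [hj]
      rw [Finset.sum_ite_eq' Finset.univ (⟨i.1 - 2, by omega⟩ : Fin k)
        (fun j => w.1 ⟨j.1 + 1, by omega⟩)]
      rw [if_pos (Finset.mem_univ _)]
      exact congrArg w.1 (Fin.ext (by simp only [Fin.val_mk]; omega))
    rw [hsum, if_neg (by simp [Fin.ext_iff]; omega), if_neg (by simp [Fin.ext_iff]; omega),
      if_neg (by omega), if_neg (by omega), if_pos h2]
    ring

lemma fderiv_mom_dir (w : E k) (i : Fin (k+2)) :
    fderiv ℝ (jetHam k) w (Pi.single i 1, (0 : Fin (k+2) → ℝ))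
      = if h : 1 ≤ i.1 ∧ i.1 ≤ k then P1 k w * w.2 ⟨i.1 + 1, by omega⟩ else 0 := by
  rw [fderiv_jetHam_apply]
  simp only [Pi.single_apply, Pi.zero_apply, mul_zero, add_zero, zero_add, mul_ite, mul_one]
  by_cases h : 1 ≤ i.1 ∧ i.1 ≤ k
  · have hj : ∀ j : Fin k, ((⟨j.1 + 1, by omega⟩ : Fin (k+2)) = i) ↔ j = ⟨i.1 - 1, by omega⟩ := by
      intro j; simp only [Fin.ext_iff]; omega
    have hsum : ∑ j : Fin k, (if (⟨j.1 + 1, by omega⟩ : Fin (k+2)) = i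
        then w.2 ⟨j.1 + 2, by omega⟩ else 0) = w.2 ⟨i.1 + 1, by omega⟩ := by
      simp only [hj]
      rw [Finset.sum_ite_eq' Finset.univ (⟨i.1 - 1, by omega⟩ : Fin k)
        (fun j => w.2 ⟨j.1 + 2, by omega⟩)]
      rw [if_pos (Finset.mem_univ _)]
      exact congrArg w.2 (Fin.ext (by simp only [Fin.val_mk]; omega))
    rw [hsum, dif_pos h]
  · have hsum : ∑ j : Fin k, (if (⟨j.1 + 1, by omega⟩ : Fin (k+2)) = i
        then w.2 ⟨j.1 + 2, by omega⟩ else 0) = 0 := by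
      refine Finset.sum_eq_zero fun j _ => ?_
      rw [if_neg (by simp only [Fin.ext_iff]; omega)]
    rw [hsum, dif_neg h, mul_zero]

end JetAux

namespace JetAux

variable {k : ℕ}

noncomputable def gaux (k : ℕ) (w : E k) : ℕ → ℝ := fun n =>
  if h : 1 ≤ n ∧ n ≤ k - 1 then P1 k w * w.1 ⟨n, by omega⟩ * w.2 ⟨n + 2, by omega⟩ else 0

lemma term_eq (k : ℕ) (hk : 0 < k) (w : E k) (j : Fin k) :
    ((if j.1 + 1 = 0 then P1 k w else 0) + (if j.1 + 1 = 1 then w.2 ⟨1, by omega⟩ else 0)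
        + (if 2 ≤ j.1 + 1 then P1 k w * w.1 ⟨j.1 + 1 - 1, by omega⟩ else 0))
      * w.2 ⟨j.1 + 2, by omega⟩
    + w.1 ⟨j.1 + 1, by omega⟩
      * -(if h : 1 ≤ j.1 + 2 ∧ j.1 + 2 ≤ k then P1 k w * w.2 ⟨j.1 + 2 + 1, by omega⟩ else 0)
    = (if j.1 = 0 then w.2 ⟨1, by omega⟩ * w.2 ⟨2, by omega⟩ else 0)
      + (gaux k w j.1 - gaux k w (j.1 + 1)) := by
  simp only [gaux]
  rcases Nat.eq_zero_or_pos j.1 with hj0 | hj1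
  · rw [if_neg (by omega), if_pos (by omega), if_neg (by omega), if_pos hj0,
      dif_neg (show ¬(1 ≤ j.1 ∧ j.1 ≤ k - 1) by omega)]
    by_cases h2k : 2 ≤ k
    · rw [dif_pos (show 1 ≤ j.1 + 2 ∧ j.1 + 2 ≤ k by omega),
        dif_pos (show 1 ≤ j.1 + 1 ∧ j.1 + 1 ≤ k - 1 by omega)]
      have e1 : (⟨j.1 + 1, by omega⟩ : Fin (k+2)) = ⟨1, by omega⟩ := Fin.ext (by simp only [Fin.val_mk]; omega)
      have e2 : (⟨j.1 + 2, by omega⟩ : Fin (k+2)) = ⟨2, by omega⟩ := Fin.ext (by simp only [Fin.val_mk]; omega)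
      have e3 : (⟨j.1 + 2 + 1, by omega⟩ : Fin (k+2)) = ⟨j.1 + 1 + 2, by omega⟩ :=
        Fin.ext (by simp only [Fin.val_mk])
      rw [e1, e2, e3]
      ring
    · rw [dif_neg (show ¬(1 ≤ j.1 + 2 ∧ j.1 + 2 ≤ k) by omega),
        dif_neg (show ¬(1 ≤ j.1 + 1 ∧ j.1 + 1 ≤ k - 1) by omega)]
      have e2 : (⟨j.1 + 2, by omega⟩ : Fin (k+2)) = ⟨2, by omega⟩ := Fin.ext (by simp only [Fin.val_mk]; omega)
      rw [e2]
      ring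
  · have hjk : j.1 < k := j.2
    rw [if_neg (by omega), if_neg (by omega), if_pos (by omega), if_neg (by omega),
      dif_pos (show 1 ≤ j.1 ∧ j.1 ≤ k - 1 by omega)]
    have e4 : (⟨j.1 + 1 - 1, by omega⟩ : Fin (k+2)) = ⟨j.1, by omega⟩ := Fin.ext (by simp)
    by_cases hj2 : j.1 + 2 ≤ k
    · rw [dif_pos (show 1 ≤ j.1 + 2 ∧ j.1 + 2 ≤ k by omega),
        dif_pos (show 1 ≤ j.1 + 1 ∧ j.1 + 1 ≤ k - 1 by omega)]
      have e3 : (⟨j.1 + 2 + 1, by omega⟩ : Fin (k+2)) = ⟨j.1 + 1 + 2, by omega⟩ :=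
        Fin.ext (by simp only [Fin.val_mk])
      rw [e3, e4]
      ring
    · rw [dif_neg (show ¬(1 ≤ j.1 + 2 ∧ j.1 + 2 ≤ k) by omega),
        dif_neg (show ¬(1 ≤ j.1 + 1 ∧ j.1 + 1 ≤ k - 1) by omega)]
      rw [e4]
      ring

lemma telescope (k : ℕ) (hk : 0 < k) (w : E k) :
    -(if h : 1 ≤ (0:ℕ) ∧ (0:ℕ) ≤ k then P1 k w * w.2 ⟨0 + 1, by omega⟩ else 0)
      + ∑ j : Fin k,
        (((if j.1 + 1 = 0 then P1 k w else 0) + (if j.1 + 1 = 1 then w.2 ⟨1, by omega⟩ else 0)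
            + (if 2 ≤ j.1 + 1 then P1 k w * w.1 ⟨j.1 + 1 - 1, by omega⟩ else 0))
          * w.2 ⟨j.1 + 2, by omega⟩
        + w.1 ⟨j.1 + 1, by omega⟩
          * -(if h : 1 ≤ j.1 + 2 ∧ j.1 + 2 ≤ k then P1 k w * w.2 ⟨j.1 + 2 + 1, by omega⟩ else 0))
    = w.2 ⟨2, by omega⟩ * w.2 ⟨1, by omega⟩ := by
  rw [dif_neg (show ¬(1 ≤ (0:ℕ) ∧ (0:ℕ) ≤ k) by omega), neg_zero, zero_add,
    Finset.sum_congr rfl (fun j _ => term_eq k hk w j), Finset.sum_add_distrib,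
    Fin.sum_univ_eq_sum_range
      (fun n => if n = 0 then w.2 ⟨1, by omega⟩ * w.2 ⟨2, by omega⟩ else 0) k,
    Finset.sum_ite_eq' (Finset.range k) 0
      (fun _ => w.2 ⟨1, by omega⟩ * w.2 ⟨2, by omega⟩),
    if_pos (Finset.mem_range.mpr (by omega : 0 < k)),
    Fin.sum_univ_eq_sum_range (fun n => gaux k w n - gaux k w (n + 1)) k,
    Finset.sum_range_sub' (gaux k w) k,
    show gaux k w 0 = 0 from dif_neg (by omega),
    show gaux k w k = 0 from dif_neg (by omega)]
  ring

end JetAux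

open JetAux
/-- along any solution of Hamilton's equations for `H`,
`x' = P_1`, `u_k' = P_2`, and the functions `Q_i = P_i ∘ z` satisfy
`Q_1' = Q_3 Q_2`, `Q_i' = -Q_1 Q_{i+1}` for `2 ≤ i ≤ k+1`, and `Q_{k+2}' = 0`. -/
theorem stmt_0 (k : ℕ) (hk : 1 ≤ k)
    (z : ℝ → (Fin (k + 2) → ℝ) × (Fin (k + 2) → ℝ))
    (hq : ∀ (t : ℝ) (i : Fin (k + 2)),
      HasDerivAt (fun s => (z s).1 i)
        (fderiv ℝ (jetHam k) (z t) ((0 : Fin (k + 2) → ℝ), (Pi.single i 1 : Fin (k + 2) → ℝ))) t)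
    (hp : ∀ (t : ℝ) (i : Fin (k + 2)),
      HasDerivAt (fun s => (z s).2 i)
        (-(fderiv ℝ (jetHam k) (z t) ((Pi.single i 1 : Fin (k + 2) → ℝ), (0 : Fin (k + 2) → ℝ)))) t) :
    (∀ t : ℝ, HasDerivAt (fun s => (z s).1 ⟨0, by omega⟩)
      (powerFn k ⟨0, by omega⟩ (z t)) t) ∧
    (∀ t : ℝ, HasDerivAt (fun s => (z s).1 ⟨1, by omega⟩)
      (powerFn k ⟨1, by omega⟩ (z t)) t) ∧
    (∀ t : ℝ, HasDerivAt (fun s => powerFn k ⟨0, by omega⟩ (z s))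
      (powerFn k ⟨2, by omega⟩ (z t) * powerFn k ⟨1, by omega⟩ (z t)) t) ∧
    (∀ (i : ℕ) (_h2 : 2 ≤ i) (_hik : i ≤ k + 1) (t : ℝ),
      HasDerivAt (fun s => powerFn k ⟨i - 1, by omega⟩ (z s))
        (-(powerFn k ⟨0, by omega⟩ (z t) * powerFn k ⟨i, by omega⟩ (z t))) t) ∧
    (∀ t : ℝ, HasDerivAt (fun s => powerFn k ⟨k + 1, by omega⟩ (z s)) 0 t) := by
  have hq' : ∀ (t : ℝ) (i : Fin (k + 2)), HasDerivAt (fun s => (z s).1 i)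
      ((if i.1 = 0 then P1 k (z t) else 0)
        + (if i.1 = 1 then (z t).2 ⟨1, by omega⟩ else 0)
        + (if 2 ≤ i.1 then P1 k (z t) * (z t).1 ⟨i.1 - 1, by omega⟩ else 0)) t := by
    intro t i
    have := hq t i
    rwa [fderiv_config_dir] at this
  have hp' : ∀ (t : ℝ) (i : Fin (k + 2)), HasDerivAt (fun s => (z s).2 i)
      (-(if h : 1 ≤ i.1 ∧ i.1 ≤ k then P1 k (z t) * (z t).2 ⟨i.1 + 1, by omega⟩ else 0)) t := by
    intro t i
    have := hp t i
    rwa [fderiv_mom_dir] at this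
  refine ⟨?_, ?_, ?_, ?_, ?_⟩
  · intro t
    rw [powerFn_zero]
    simpa using hq' t ⟨0, by omega⟩
  · intro t
    rw [powerFn_ne _ (by simp [Fin.ext_iff] : (⟨1, by omega⟩ : Fin (k+2)) ≠ ⟨0, by omega⟩)]
    simpa using hq' t ⟨1, by omega⟩
  · intro t
    have hfun : (fun s => powerFn k ⟨0, by omega⟩ (z s))
        = fun s => (z s).2 ⟨0, by omega⟩
            + ∑ j : Fin k, (z s).1 ⟨j.1 + 1, by omega⟩ * (z s).2 ⟨j.1 + 2, by omega⟩ :=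
      funext fun s => powerFn_zero _
    rw [hfun, powerFn_ne _ (by simp [Fin.ext_iff] : (⟨2, by omega⟩ : Fin (k+2)) ≠ ⟨0, by omega⟩),
      powerFn_ne _ (by simp [Fin.ext_iff] : (⟨1, by omega⟩ : Fin (k+2)) ≠ ⟨0, by omega⟩)]
    have hd : HasDerivAt
        (fun s => (z s).2 ⟨0, by omega⟩
            + ∑ j : Fin k, (z s).1 ⟨j.1 + 1, by omega⟩ * (z s).2 ⟨j.1 + 2, by omega⟩)
        (-(if h : 1 ≤ (0:ℕ) ∧ (0:ℕ) ≤ k then P1 k (z t) * (z t).2 ⟨0 + 1, by omega⟩ else 0)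
          + ∑ j : Fin k,
            (((if j.1 + 1 = 0 then P1 k (z t) else 0)
                + (if j.1 + 1 = 1 then (z t).2 ⟨1, by omega⟩ else 0)
                + (if 2 ≤ j.1 + 1 then P1 k (z t) * (z t).1 ⟨j.1 + 1 - 1, by omega⟩ else 0))
              * (z t).2 ⟨j.1 + 2, by omega⟩
            + (z t).1 ⟨j.1 + 1, by omega⟩
              * -(if h : 1 ≤ j.1 + 2 ∧ j.1 + 2 ≤ k then
                  P1 k (z t) * (z t).2 ⟨j.1 + 2 + 1, by omega⟩ else 0))) t :=
      (hp' t ⟨0, by omega⟩).add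
        (HasDerivAt.fun_sum (fun (j : Fin k) (_ : j ∈ Finset.univ) =>
          (hq' t ⟨j.1 + 1, by omega⟩).mul (hp' t ⟨j.1 + 2, by omega⟩)))
    rwa [telescope k hk (z t)] at hd
  · intro i h2 hik t
    have hne : (⟨i - 1, by omega⟩ : Fin (k+2)) ≠ ⟨0, by omega⟩ := by
      simp only [ne_eq, Fin.ext_iff]; omega
    have hfun : (fun s => powerFn k ⟨i - 1, by omega⟩ (z s))
        = fun s => (z s).2 ⟨i - 1, by omega⟩ := funext fun s => powerFn_ne _ hne _
    rw [hfun, powerFn_zero,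
      powerFn_ne _ (show (⟨i, by omega⟩ : Fin (k+2)) ≠ ⟨0, by omega⟩ by
        simp only [ne_eq, Fin.ext_iff]; omega)]
    have h := hp' t ⟨i - 1, by omega⟩
    rw [dif_pos (⟨by omega, by omega⟩ : 1 ≤ i - 1 ∧ i - 1 ≤ k)] at h
    have e : (⟨i - 1 + 1, by omega⟩ : Fin (k+2)) = ⟨i, by omega⟩ := Fin.ext (by simp only [Fin.val_mk]; omega)
    rwa [e] at h
  · intro t
    have hfun : (fun s => powerFn k ⟨k + 1, by omega⟩ (z s))
        = fun s => (z s).2 ⟨k + 1, by omega⟩ :=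
      funext fun s => powerFn_ne _ (by simp only [ne_eq, Fin.ext_iff]; omega) _
    rw [hfun]
    have h := hp' t ⟨k + 1, by omega⟩
    rw [dif_neg (show ¬(1 ≤ k + 1 ∧ k + 1 ≤ k) by omega)] at h
    simpa using h
end

section
/- Let k ≥ 2 and let P_1,…,P_{k+2}: ℝ → ℝ be differentiable functions satisfying the reduced geodesic equations. Then for every i = 1,…,k the function s ↦ C_i(P_2(s),…,P_{k+2}(s)) is constant on ℝ. -/
/-- The reduced geodesic equations for the jet space `J^k` (1-based index `i`):
`P_1' = P_3 P_2`, `P_i' = −P_1 P_{i+1}` for `2 ≤ i ≤ k+1`, and `P_{k+2}' = 0`. -/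
def ReducedGeodesic (k : ℕ) (P : ℕ → ℝ → ℝ) : Prop :=
  (∀ s : ℝ, HasDerivAt (P 1) (P 3 s * P 2 s) s) ∧
  (∀ (i : ℕ), 2 ≤ i → i ≤ k + 1 → ∀ s : ℝ, HasDerivAt (P i) (-(P 1 s * P (i + 1) s)) s) ∧
  (∀ s : ℝ, HasDerivAt (P (k + 2)) 0 s)

/-- The Casimir functions `C_1, …, C_k` of the variables `(P_2, …, P_{k+2})`:
`C_1 = P_{k+2}` and, for `2 ≤ i ≤ k`,
`C_i = P_{k+2}^{i-1} P_{k+2-i} + ∑_{j=1}^{i-2} (−1)^j P_{k+2}^{i-1-j} P_{k+2-i+j} P_{k+1}^j/j!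
      + (−1)^{i-1} P_{k+1}^i/((i−2)!·i)`.
Here `P : ℕ → ℝ` records the values of the variables (1-based indexing). -/
noncomputable def casimir (k i : ℕ) (P : ℕ → ℝ) : ℝ :=
  if i = 1 then P (k + 2)
  else
    P (k + 2) ^ (i - 1) * P (k + 2 - i)
      + ∑ j ∈ Finset.Icc 1 (i - 2),
          (-1 : ℝ) ^ j * P (k + 2) ^ (i - 1 - j) * P (k + 2 - i + j) * P (k + 1) ^ j
            / (Nat.factorial j : ℝ)
      + (-1 : ℝ) ^ (i - 1) * P (k + 1) ^ i / ((Nat.factorial (i - 2) : ℝ) * (i : ℝ))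

lemma tele (g : ℕ → ℝ) (n : ℕ) : ∑ j ∈ Finset.Icc 1 n, (g (j-1) - g j) = g 0 - g n := by
  induction n with
  | zero => simp
  | succ m ih =>
    rw [Finset.sum_Icc_succ_top (by omega), ih]
    simp

/-- along any solution of the reduced geodesic equations, each Casimir
function `C_i`, `1 ≤ i ≤ k`, is constant. -/
theorem stmt_2 (k : ℕ) (hk : 2 ≤ k) (P : ℕ → ℝ → ℝ) (hP : ReducedGeodesic k P)
    (i : ℕ) (hi1 : 1 ≤ i) (hik : i ≤ k) (s t : ℝ) :
    casimir k i (fun m => P m s) = casimir k i (fun m => P m t) := by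
  obtain ⟨h1, h2, h3⟩ := hP
  suffices h : ∀ u : ℝ, HasDerivAt (fun s => casimir k i (fun m => P m s)) 0 u by
    exact is_const_of_deriv_eq_zero (fun u => (h u).differentiableAt)
      (fun u => (h u).deriv) s t
  intro u
  rcases eq_or_lt_of_le hi1 with h | h
  · simp only [casimir, if_pos (h.symm : i = 1)]
    exact h3 u
  · obtain ⟨n, rfl⟩ : ∃ n, i = n + 2 := ⟨i - 2, by omega⟩
    have hne : n + 2 ≠ 1 := by omega
    simp only [casimir, if_neg hne, show n + 2 - 1 = n + 1 from rfl,
      show n + 2 - 2 = n from rfl, show k + 2 - (n + 2) = k - n from by omega]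
    set g : ℕ → ℝ := fun j =>
      (-1 : ℝ) ^ j * P 1 u * P (k+2) u ^ (n+1-j) * P (k-n+j+1) u * P (k+1) u ^ j
        / (Nat.factorial j : ℝ) with hg
    have hQ : HasDerivAt (P (k+2)) 0 u := h3 u
    have hA : HasDerivAt (P (k+1)) (-(P 1 u * P (k+2) u)) u := by
      have := h2 (k+1) (by omega) (le_refl _) u
      simpa using this
    have t1 : HasDerivAt (fun s => P (k+2) s ^ (n+1) * P (k-n) s) (-(g 0)) u := by
      have hp : HasDerivAt (P (k-n)) (-(P 1 u * P (k-n+1) u)) u :=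
        h2 (k-n) (by omega) (by omega) u
      have := (hQ.pow (n+1)).mul hp
      refine this.congr_deriv ?_
      simp only [Pi.pow_apply]
      simp only [hg, pow_zero, one_mul, Nat.sub_zero, Nat.add_zero, Nat.factorial_zero,
        Nat.cast_one, div_one]
      ring_nf
    have t2 : HasDerivAt
        (fun s => ∑ j ∈ Finset.Icc 1 n,
          (-1 : ℝ) ^ j * P (k+2) s ^ (n+1-j) * P (k-n+j) s * P (k+1) s ^ j
            / (Nat.factorial j : ℝ))
        (∑ j ∈ Finset.Icc 1 n, (g (j-1) - g j)) u := by
      apply HasDerivAt.fun_sum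
      intro j hj
      simp only [Finset.mem_Icc] at hj
      obtain ⟨m, rfl⟩ : ∃ m, j = m + 1 := ⟨j - 1, by omega⟩
      obtain ⟨d, rfl⟩ : ∃ d, n = m + 1 + d := ⟨n - (m+1), by omega⟩
      have hp : HasDerivAt (P (k-(m+1+d)+(m+1)))
          (-(P 1 u * P (k-(m+1+d)+(m+1)+1) u)) u :=
        h2 _ (by omega) (by omega) u
      have := ((((hQ.pow (m+1+d+1-(m+1))).const_mul ((-1:ℝ)^(m+1))).mul hp).mul
        (hA.pow (m+1))).div_const (Nat.factorial (m+1) : ℝ)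
      refine this.congr_deriv ?_
      simp only [Pi.pow_apply, Pi.mul_apply]
      have e1 : m + 1 + d + 1 - (m + 1) = d + 1 := by omega
      have e2 : m + 1 + d + 1 - m = d + 2 := by omega
      have e3 : m + 1 - 1 = m := rfl
      simp only [hg, e1, e2, e3, Nat.factorial_succ, Nat.add_sub_cancel]
      have hfac : (Nat.factorial m : ℝ) ≠ 0 := Nat.cast_ne_zero.mpr (Nat.factorial_ne_zero m)
      field_simp
      push_cast
      ring_nf
    have t3 : HasDerivAt
        (fun s => (-1 : ℝ) ^ (n+1) * P (k+1) s ^ (n+2)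
          / ((Nat.factorial n : ℝ) * ((n+2 : ℕ) : ℝ))) (g n) u := by
      have := ((hA.pow (n+2)).const_mul ((-1:ℝ)^(n+1))).div_const
        ((Nat.factorial n : ℝ) * ((n+2 : ℕ) : ℝ))
      refine this.congr_deriv ?_
      simp only [show n + 2 - 1 = n + 1 from rfl]
      have e1 : n + 1 - n = 1 := by omega
      have e2 : k - n + n + 1 = k + 1 := by omega
      simp only [hg, e1, e2]
      have hfac : (Nat.factorial n : ℝ) ≠ 0 := Nat.cast_ne_zero.mpr (Nat.factorial_ne_zero n)
      have h2' : ((n:ℝ) + 2) ≠ 0 := by positivity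
      field_simp
      ring_nf
    have total := (t1.add t2).add t3
    rw [tele g n] at total
    refine total.congr_deriv ?_
    ring
end

section
/- Let k ≥ 2. At every point (P_2,…,P_{k+2}) ∈ ℝ^{k+1} with P_{k+2} ≠ 0, the derivative of the map (C_1,…,C_k): ℝ^{k+1} → ℝ^k is surjective; that is, the differentials dC_1,…,dC_k are linearly independent wherever P_{k+2} ≠ 0. -/
/-- A point `v ∈ ℝ^{k+1}` records the variables `(P_2, …, P_{k+2})`, with `v j = P_{j+2}`;
`extendVars` re-expresses it with the 1-based indexing used by `casimir`. -/
def extendVars (k : ℕ) (v : Fin (k + 1) → ℝ) : ℕ → ℝ :=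
  fun m => if h : 2 ≤ m ∧ m ≤ k + 2 then v ⟨m - 2, by omega⟩ else 0

/-- The map `(C_1, …, C_k) : ℝ^{k+1} → ℝ^k`. -/
noncomputable def casimirMap (k : ℕ) (v : Fin (k + 1) → ℝ) : Fin k → ℝ :=
  fun i => casimir k (i.1 + 1) (extendVars k v)

lemma diff_ext (k m : ℕ) : Differentiable ℝ (fun w : Fin (k + 1) → ℝ => extendVars k w m) := by
  by_cases h : 2 ≤ m ∧ m ≤ k + 2
  · simp only [extendVars, dif_pos h]
    exact differentiable_pi.mp differentiable_id _
  · simp only [extendVars, dif_neg h]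
    exact differentiable_const 0

lemma diff_cas (k i : ℕ) :
    Differentiable ℝ (fun w : Fin (k + 1) → ℝ => casimir k i (extendVars k w)) := by
  unfold casimir
  by_cases h : i = 1
  · simp only [if_pos h]; exact diff_ext k (k + 2)
  · simp only [if_neg h, div_eq_mul_inv]
    refine Differentiable.add (Differentiable.add ?_ ?_) ?_
    · exact ((diff_ext k (k + 2)).pow _).mul (diff_ext k _)
    · refine Differentiable.fun_sum fun j _ => ?_
      exact ((((differentiable_const _).mul ((diff_ext k (k + 2)).pow _)).mul
        (diff_ext k _)).mul ((diff_ext k (k + 1)).pow _)).mul (differentiable_const _)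
    · exact ((differentiable_const _).mul ((diff_ext k (k + 1)).pow _)).mul
        (differentiable_const _)

lemma ext_add (k : ℕ) (v : Fin (k + 1) → ℝ) (t : ℝ) (p : Fin (k + 1)) (m : ℕ) :
    extendVars k (v + t • (Pi.single p 1 : Fin (k+1) → ℝ)) m =
      extendVars k v m + if 2 ≤ m ∧ m ≤ k + 2 ∧ m - 2 = p.1 then t else 0 := by
  by_cases h : 2 ≤ m ∧ m ≤ k + 2
  · simp only [extendVars, dif_pos h, Pi.add_apply, Pi.smul_apply, smul_eq_mul]
    by_cases h2 : m - 2 = p.1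
    · have hp : (⟨m - 2, by omega⟩ : Fin (k + 1)) = p := Fin.ext h2
      rw [hp, Pi.single_eq_same, if_pos ⟨h.1, h.2, h2⟩]
      ring
    · have hp : (⟨m - 2, by omega⟩ : Fin (k + 1)) ≠ p := fun he => h2 (congrArg Fin.val he)
      rw [Pi.single_eq_of_ne hp, if_neg (fun hc => h2 hc.2.2)]
      ring
  · simp only [extendVars, dif_neg h]
    rw [if_neg (fun hc => h ⟨hc.1, hc.2.1⟩), add_zero]

lemma ext_top (k : ℕ) (v : Fin (k + 1) → ℝ) :
    extendVars k v (k + 2) = v ⟨k, Nat.lt_succ_self k⟩ := by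
  simp only [extendVars, dif_pos (by omega : 2 ≤ k + 2 ∧ k + 2 ≤ k + 2)]
  rfl

lemma casimir_congr (k i : ℕ) (hi : 1 ≤ i) (hik : i ≤ k + 1) (P Q : ℕ → ℝ)
    (h : ∀ m, k + 2 - i ≤ m → m ≤ k + 2 → P m = Q m) : casimir k i P = casimir k i Q := by
  unfold casimir
  split_ifs with h1
  · exact h _ (by omega) (by omega)
  · rw [h (k + 2) (by omega) (by omega), h (k + 2 - i) (by omega) (by omega),
      h (k + 1) (by omega) (by omega)]
    congr 2
    refine Finset.sum_congr rfl fun j hj => ?_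
    simp only [Finset.mem_Icc] at hj
    rw [h (k + 2 - i + j) (by omega) (by omega)]

/-- direction vectors -/
def dir (k : ℕ) (j : Fin k) : Fin (k + 1) :=
  if j.1 = 0 then ⟨k, Nat.lt_succ_self k⟩ else ⟨k - 1 - j.1, by omega⟩

lemma key_zero (k : ℕ) (v : Fin (k + 1) → ℝ) (t : ℝ) (i j : Fin k) (hij : i < j) :
    casimir k (i.1 + 1) (extendVars k (v + t • (Pi.single (dir k j) 1 : Fin (k+1) → ℝ))) =
      casimir k (i.1 + 1) (extendVars k v) := by
  have hj0 : ¬ j.1 = 0 := by omega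
  have hd : (dir k j).1 = k - 1 - j.1 := by simp only [dir, if_neg hj0]
  refine casimir_congr k (i.1 + 1) (by omega) (by omega) _ _ fun m h1 h2 => ?_
  rw [ext_add, if_neg, add_zero]
  rintro ⟨hm1, hm2, hm3⟩
  have hik : i.1 < k := i.2
  have hjk : j.1 < k := j.2
  omega

lemma key_diag (k : ℕ) (hk : 2 ≤ k) (v : Fin (k + 1) → ℝ) (t : ℝ) (i : Fin k) :
    casimir k (i.1 + 1) (extendVars k (v + t • (Pi.single (dir k i) 1 : Fin (k+1) → ℝ))) =
      casimir k (i.1 + 1) (extendVars k v) + t * (v ⟨k, Nat.lt_succ_self k⟩) ^ i.1 := by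
  have hik : i.1 < k := i.2
  by_cases h0 : i.1 = 0
  · have hd : dir k i = ⟨k, Nat.lt_succ_self k⟩ := by simp only [dir, if_pos h0]
    rw [h0, hd]
    show casimir k 1 _ = casimir k 1 _ + t * _ ^ (0 : ℕ)
    unfold casimir
    rw [if_pos rfl, if_pos rfl, ext_add, if_pos ⟨by omega, by omega, rfl⟩, pow_zero, mul_one]
  · have hd : (dir k i).1 = k - 1 - i.1 := by simp only [dir, if_neg h0]
    have hne : ¬ i.1 + 1 = 1 := by omega
    unfold casimir
    rw [if_neg hne, if_neg hne]
    have hA : extendVars k (v + t • (Pi.single (dir k i) 1 : Fin (k+1) → ℝ)) (k + 2) = extendVars k v (k + 2) := by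
      rw [ext_add, if_neg, add_zero]; rintro ⟨_, _, hm3⟩; omega
    have hB : extendVars k (v + t • (Pi.single (dir k i) 1 : Fin (k+1) → ℝ)) (k + 2 - (i.1 + 1)) =
        extendVars k v (k + 2 - (i.1 + 1)) + t := by
      rw [ext_add, if_pos ⟨by omega, by omega, by omega⟩]
    have hD : extendVars k (v + t • (Pi.single (dir k i) 1 : Fin (k+1) → ℝ)) (k + 1) = extendVars k v (k + 1) := by
      rw [ext_add, if_neg, add_zero]; rintro ⟨_, _, hm3⟩; omega
    have hS : ∑ j ∈ Finset.Icc 1 (i.1 + 1 - 2),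
        (-1 : ℝ) ^ j * extendVars k (v + t • (Pi.single (dir k i) 1 : Fin (k+1) → ℝ)) (k + 2) ^ (i.1 + 1 - 1 - j) *
          extendVars k (v + t • (Pi.single (dir k i) 1 : Fin (k+1) → ℝ)) (k + 2 - (i.1 + 1) + j) *
          extendVars k (v + t • (Pi.single (dir k i) 1 : Fin (k+1) → ℝ)) (k + 1) ^ j / (Nat.factorial j : ℝ) =
        ∑ j ∈ Finset.Icc 1 (i.1 + 1 - 2),
        (-1 : ℝ) ^ j * extendVars k v (k + 2) ^ (i.1 + 1 - 1 - j) *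
          extendVars k v (k + 2 - (i.1 + 1) + j) *
          extendVars k v (k + 1) ^ j / (Nat.factorial j : ℝ) := by
      refine Finset.sum_congr rfl fun j hj => ?_
      simp only [Finset.mem_Icc] at hj
      rw [hA, hD]
      congr 2
      rw [ext_add, if_neg, add_zero]
      rintro ⟨_, _, hm3⟩; omega
    rw [hS, hA, hB, hD, ext_top]
    simp only [Nat.add_sub_cancel]
    ring

lemma fderiv_eq_of_affine (k i : ℕ) (v u : Fin (k + 1) → ℝ) (a : ℝ)
    (haff : ∀ t : ℝ, casimir k i (extendVars k (v + t • u)) =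
      casimir k i (extendVars k v) + t * a) :
    fderiv ℝ (fun w => casimir k i (extendVars k w)) v u = a := by
  have hline : HasDerivAt (fun t : ℝ => v + t • u) u 0 := by
    simpa using ((hasDerivAt_id (0 : ℝ)).smul_const u).const_add v
  have h1 : HasDerivAt (fun t : ℝ => casimir k i (extendVars k (v + t • u)))
      (fderiv ℝ (fun w => casimir k i (extendVars k w)) v u) 0 := by
    have hF : HasFDerivAt (fun w => casimir k i (extendVars k w))
        (fderiv ℝ (fun w => casimir k i (extendVars k w)) v) (v + (0 : ℝ) • u) := by
      simpa using ((diff_cas k i) v).hasFDerivAt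
    exact hF.comp_hasDerivAt 0 hline
  have h2 : HasDerivAt (fun t : ℝ => casimir k i (extendVars k v) + t * a) a 0 :=
    (hasDerivAt_mul_const a).const_add _
  rw [funext haff] at h1
  exact (h2.unique h1).symm

noncomputable def Mmat (k : ℕ) (v : Fin (k + 1) → ℝ) : Matrix (Fin k) (Fin k) ℝ :=
  Matrix.of fun i j =>
    fderiv ℝ (fun w => casimir k (i.1 + 1) (extendVars k w)) v
      (Pi.single (dir k j) 1 : Fin (k + 1) → ℝ)

lemma Mmat_diag (k : ℕ) (hk : 2 ≤ k) (v : Fin (k + 1) → ℝ) (i : Fin k) :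
    Mmat k v i i = (v ⟨k, Nat.lt_succ_self k⟩) ^ i.1 :=
  fderiv_eq_of_affine k (i.1 + 1) v _ _ (fun t => key_diag k hk v t i)

lemma Mmat_zero (k : ℕ) (v : Fin (k + 1) → ℝ) (i j : Fin k) (hij : i < j) :
    Mmat k v i j = 0 :=
  fderiv_eq_of_affine k (i.1 + 1) v _ _ (fun t => by
    rw [key_zero k v t i j hij]; ring)

lemma Mmat_det (k : ℕ) (hk : 2 ≤ k) (v : Fin (k + 1) → ℝ) (hv : v ⟨k, Nat.lt_succ_self k⟩ ≠ 0) :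
    IsUnit (Mmat k v).det := by
  have htri : (Mmat k v).BlockTriangular OrderDual.toDual := by
    intro i j hij
    exact Mmat_zero k v i j hij
  rw [Matrix.det_of_lowerTriangular _ htri]
  refine (Finset.prod_ne_zero_iff.2 fun i _ => ?_).isUnit
  rw [Mmat_diag k hk v i]
  exact pow_ne_zero _ hv

/-- at every point with `P_{k+2} ≠ 0` the derivative of
`(C_1, …, C_k) : ℝ^{k+1} → ℝ^k` is surjective; equivalently the differentials
`dC_1, …, dC_k` are linearly independent there. -/
theorem stmt_3 (k : ℕ) (hk : 2 ≤ k) (v : Fin (k + 1) → ℝ)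
    (hv : v ⟨k, by omega⟩ ≠ 0) :
    Function.Surjective (fderiv ℝ (casimirMap k) v) ∧
    LinearIndependent ℝ (fun i : Fin k =>
      fderiv ℝ (fun w => casimir k (i.1 + 1) (extendVars k w)) v) := by
  have hdet := Mmat_det k hk v hv
  have hinv : Mmat k v * (Mmat k v)⁻¹ = 1 := Matrix.mul_nonsing_inv _ hdet
  constructor
  · have hpi : fderiv ℝ (casimirMap k) v = ContinuousLinearMap.pi
        (fun i : Fin k => fderiv ℝ (fun w => casimir k (i.1 + 1) (extendVars k w)) v) := by
      exact fderiv_pi fun i => (diff_cas k (i.1 + 1)).differentiableAt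
    intro y
    refine ⟨∑ j : Fin k, (Mmat k v)⁻¹.mulVec y j • (Pi.single (dir k j) 1 : Fin (k + 1) → ℝ), ?_⟩
    rw [hpi]
    funext i
    rw [ContinuousLinearMap.pi_apply, map_sum]
    simp only [map_smul, smul_eq_mul]
    have : ∑ j : Fin k, (Mmat k v)⁻¹.mulVec y j *
        fderiv ℝ (fun w => casimir k (i.1 + 1) (extendVars k w)) v
          (Pi.single (dir k j) 1 : Fin (k + 1) → ℝ) =
        (Mmat k v).mulVec ((Mmat k v)⁻¹.mulVec y) i := by
      rw [Matrix.mulVec, dotProduct]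
      exact Finset.sum_congr rfl fun j _ => mul_comm _ _
    rw [this, Matrix.mulVec_mulVec, hinv, Matrix.one_mulVec]
  · rw [Fintype.linearIndependent_iff]
    intro g hg
    have hgv : Matrix.vecMul g (Mmat k v) = 0 := by
      funext j
      have h1 := congrArg (fun T : (Fin (k + 1) → ℝ) →L[ℝ] ℝ =>
        T (Pi.single (dir k j) 1 : Fin (k + 1) → ℝ)) hg
      simp only [ContinuousLinearMap.coe_sum', Finset.sum_apply,
        ContinuousLinearMap.coe_smul', Pi.smul_apply, smul_eq_mul,
        ContinuousLinearMap.zero_apply] at h1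
      rw [Matrix.vecMul, dotProduct]
      exact h1
    have : g = 0 := by
      have h2 := congrArg (fun w => Matrix.vecMul w (Mmat k v)⁻¹) hgv
      simpa [Matrix.vecMul_vecMul, hinv] using h2
    intro i
    rw [this]
    rfl
end

section
/- Let k ≥ 1 and let P_1,…,P_{k+2}: ℝ → ℝ be differentiable functions satisfying the reduced geodesic equations with P_1(0)² + P_2(0)² = 1. Then P_1(s)² + P_2(s)² = 1 for all s, and for any twice-differentiable plane curve c(s) = (x(s),u(s)) with x' = P_1 and u' = P_2 (a unit-speed curve), the signed curvature of c satisfies x'(s)u''(s) − u'(s)x''(s) = −P_3(s) for all s. -/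
/-- along a solution of the reduced geodesic equations with
`P_1(0)² + P_2(0)² = 1` one has `P_1² + P_2² ≡ 1`, and for any plane curve
`c = (x,u)` with `x' = P_1`, `u' = P_2` (a unit-speed curve), the signed curvature
`x'u'' − u'x''` equals `−P_3`. -/
theorem stmt_8 (k : ℕ) (hk : 1 ≤ k) (P : ℕ → ℝ → ℝ)
    (hP : ReducedGeodesic k P) (h0 : P 1 0 ^ 2 + P 2 0 ^ 2 = 1) :
    (∀ s : ℝ, P 1 s ^ 2 + P 2 s ^ 2 = 1) ∧
    (∀ x u : ℝ → ℝ,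
      (∀ s : ℝ, HasDerivAt x (P 1 s) s) → (∀ s : ℝ, HasDerivAt u (P 2 s) s) →
      ∀ s : ℝ,
        deriv x s * deriv (deriv u) s - deriv u s * deriv (deriv x) s = -(P 3 s)) := by
  obtain ⟨h1, hmid, _⟩ := hP
  have h2 : ∀ s : ℝ, HasDerivAt (P 2) (-(P 1 s * P 3 s)) s := by
    intro s
    exact hmid 2 le_rfl (by omega) s
  have hconst : ∀ s : ℝ, P 1 s ^ 2 + P 2 s ^ 2 = 1 := by
    have hf : ∀ s : ℝ, HasDerivAt (fun t => P 1 t ^ 2 + P 2 t ^ 2) 0 s := by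
      intro s
      have : HasDerivAt (fun t => P 1 t ^ 2 + P 2 t ^ 2) (((2:ℕ):ℝ) * P 1 s ^ (2 - 1) * (P 3 s * P 2 s) + ((2:ℕ):ℝ) * P 2 s ^ (2 - 1) * -(P 1 s * P 3 s)) s := ((h1 s).fun_pow 2).fun_add ((h2 s).fun_pow 2)
      convert this using 1
      ring
    intro s
    have : (fun t => P 1 t ^ 2 + P 2 t ^ 2) s = (fun t => P 1 t ^ 2 + P 2 t ^ 2) 0 :=
      is_const_of_deriv_eq_zero (fun t => (hf t).differentiableAt)
        (fun t => (hf t).deriv) s 0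
    simpa using this.trans h0
  refine ⟨hconst, ?_⟩
  intro x u hx hu s
  have hdx : deriv x = P 1 := funext fun t => (hx t).deriv
  have hdu : deriv u = P 2 := funext fun t => (hu t).deriv
  rw [hdx, hdu, (h2 s).deriv, (h1 s).deriv]
  linear_combination (-(P 3 s)) * hconst s
end

section
/- Let k ≥ 1, let P_1,…,P_{k+2}: ℝ → ℝ be differentiable functions satisfying the reduced geodesic equations, and let x: ℝ → ℝ be differentiable with x'(s) = P_1(s) for all s. Then there exists a real polynomial p of degree at most k−1 such that P_3(s) = p(x(s)) for all s ∈ ℝ. In particular, the signed curvature −P_3 of the planar projection of the corresponding sub-Riemannian geodesic of J^k is a polynomial of degree at most k−1 in the coordinate x evaluated along the curve. -/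
open Polynomial

/-- A formal antiderivative of a real polynomial. -/
noncomputable def antider (q : Polynomial ℝ) : Polynomial ℝ :=
  q.sum fun n a => C (a / (n + 1)) * X ^ (n + 1)

lemma antider_derivative (q : Polynomial ℝ) : (antider q).derivative = q := by
  unfold antider
  rw [Polynomial.sum, map_sum]
  have : ∀ n ∈ q.support, derivative (C (q.coeff n / (n + 1)) * X ^ (n + 1))
      = C (q.coeff n) * X ^ n := by
    intro n _
    rw [derivative_C_mul, derivative_X_pow, ← mul_assoc, ← C_mul]
    congr 2
    push_cast
    field_simp
  rw [Finset.sum_congr rfl this]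
  exact q.sum_C_mul_X_pow_eq

lemma antider_natDegree (q : Polynomial ℝ) : (antider q).natDegree ≤ q.natDegree + 1 := by
  unfold antider
  rw [Polynomial.sum]
  refine Polynomial.natDegree_sum_le_of_forall_le _ _ ?_
  intro n hn
  calc (C (q.coeff n / (n + 1)) * X ^ (n + 1)).natDegree
      ≤ n + 1 := by
        refine le_trans (natDegree_mul_le) ?_
        simp [natDegree_X_pow]
    _ ≤ q.natDegree + 1 := by
        exact Nat.add_le_add_right (Polynomial.le_natDegree_of_mem_supp n hn) 1

/-- along a solution of the reduced geodesic equations, if `x' = P_1`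
then `P_3` (minus the curvature of the planar projection of the geodesic) is a
polynomial of degree at most `k-1` in `x` evaluated along the curve. -/
theorem stmt_9 (k : ℕ) (hk : 1 ≤ k) (P : ℕ → ℝ → ℝ) (hP : ReducedGeodesic k P)
    (x : ℝ → ℝ) (hx : ∀ s : ℝ, HasDerivAt x (P 1 s) s) :
    ∃ p : Polynomial ℝ, p.natDegree ≤ k - 1 ∧ ∀ s : ℝ, P 3 s = p.eval (x s) := by
  obtain ⟨_, hmid, hlast⟩ := hP
  -- main claim by induction on n: for i with i + n = k + 2 and 2 ≤ i,
  -- P i is a polynomial of degree ≤ n in x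
  have key : ∀ n : ℕ, ∀ i : ℕ, i + n = k + 2 → 2 ≤ i →
      ∃ p : Polynomial ℝ, p.natDegree ≤ n ∧ ∀ s : ℝ, P i s = p.eval (x s) := by
    intro n
    induction n with
    | zero =>
      intro i hi _
      simp only [Nat.add_zero] at hi
      subst hi
      refine ⟨C (P (k + 2) 0), by simp, fun s => ?_⟩
      have hconst : P (k + 2) s = P (k + 2) 0 := by
        have hdiff : Differentiable ℝ (P (k + 2)) := fun t => (hlast t).differentiableAt
        have hderiv : ∀ t, deriv (P (k + 2)) t = 0 := fun t => (hlast t).deriv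
        exact is_const_of_deriv_eq_zero hdiff hderiv s 0
      simp [hconst]
    | succ m ih =>
      intro i hi h2i
      obtain ⟨q, hqdeg, hq⟩ := ih (i + 1) (by omega) (by omega)
      set R := antider q with hR
      -- the function P i + R ∘ x has derivative 0
      have hcomp : ∀ s : ℝ, HasDerivAt (fun t => R.eval (x t))
          (R.derivative.eval (x s) * P 1 s) s := fun s =>
        (R.hasDerivAt (x s)).comp s (hx s)
      have hf : ∀ s : ℝ, HasDerivAt (fun t => P i t + R.eval (x t)) 0 s := by
        intro s
        have h1 : HasDerivAt (P i) (-(P 1 s * P (i + 1) s)) s :=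
          hmid i h2i (by omega) s
        have := h1.add (hcomp s)
        rw [antider_derivative, ← hq s] at this
        exact this.congr_deriv (by ring)
      have hconst : ∀ s : ℝ, P i s + R.eval (x s) = P i 0 + R.eval (x 0) := by
        intro s
        have hdiff : Differentiable ℝ (fun t => P i t + R.eval (x t)) :=
          fun t => (hf t).differentiableAt
        exact is_const_of_deriv_eq_zero hdiff (fun t => (hf t).deriv) s 0
      refine ⟨C (P i 0 + R.eval (x 0)) - R, ?_, fun s => ?_⟩
      · refine le_trans (Polynomial.natDegree_sub_le _ _) ?_
        simp only [Polynomial.natDegree_C]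
        refine max_le (by omega) ?_
        calc R.natDegree ≤ q.natDegree + 1 := antider_natDegree q
          _ ≤ m + 1 := by omega
      · have := hconst s
        simp only [Polynomial.eval_sub, Polynomial.eval_C]
        linarith
  obtain ⟨p, hpd, hp⟩ := key (k - 1) 3 (by omega) (by omega)
  exact ⟨p, hpd, hp⟩
end

section
/- Let k ≥ 1, let F be a real polynomial of degree at most k, and let x: I → ℝ be a differentiable function on an open interval I with |F(x(s))| < 1 and x'(s) = √(1 − F(x(s))²) for all s ∈ I. Define P_1(s) = √(1 − F(x(s))²), P_2(s) = F(x(s)), and P_{i+2}(s) = (−1)^i F^{(i)}(x(s)) for i = 1,…,k, where F^{(i)} is the i-th derivative of F. Then P_1(s)² + P_2(s)² = 1 on I and the functions P_1,…,P_{k+2} satisfy the reduced geodesic equations on I: P_1' = P_3 P_2, P_i' = −P_1 P_{i+1} for 2 ≤ i ≤ k+1, and P_{k+2}' = 0. -/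
/-- Given a polynomial `F` and a curve coordinate `x : ℝ → ℝ`, the lifted momenta
(1-based index): `P_1 = √(1 − F(x)²)`, `P_2 = F(x)`, and `P_{i+2} = (−1)^i F^{(i)}(x)`
for `i ≥ 1`. -/
noncomputable def polyLift (F : Polynomial ℝ) (x : ℝ → ℝ) : ℕ → ℝ → ℝ :=
  fun i s =>
    if i = 1 then Real.sqrt (1 - F.eval (x s) ^ 2)
    else if i = 2 then F.eval (x s)
    else (-1 : ℝ) ^ (i - 2) * ((Polynomial.derivative)^[i - 2] F).eval (x s)

private lemma polyComp_deriv (p : Polynomial ℝ) (x : ℝ → ℝ) (s d : ℝ)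
    (hx : HasDerivAt x d s) :
    HasDerivAt (fun t => p.eval (x t)) (p.derivative.eval (x s) * d) s :=
  (p.hasDerivAt (x s)).comp s hx

/-- if `F` is a polynomial of degree at most `k` and `x` solves
`x' = √(1 − F(x)²)` with `|F(x)| < 1` on an open interval `I`, then the lifted momenta
`P_1, …, P_{k+2}` satisfy `P_1² + P_2² = 1` and the reduced geodesic equations on `I`:
`P_1' = P_3 P_2`, `P_i' = −P_1 P_{i+1}` for `2 ≤ i ≤ k+1`, and `P_{k+2}' = 0`. -/
theorem stmt_10 (k : ℕ) (hk : 1 ≤ k) (F : Polynomial ℝ) (hF : F.natDegree ≤ k)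
    (I : Set ℝ) (hIopen : IsOpen I) (hIconn : I.OrdConnected) (x : ℝ → ℝ)
    (hxF : ∀ s ∈ I, |F.eval (x s)| < 1)
    (hx : ∀ s ∈ I, HasDerivAt x (Real.sqrt (1 - F.eval (x s) ^ 2)) s) :
    (∀ s ∈ I, polyLift F x 1 s ^ 2 + polyLift F x 2 s ^ 2 = 1) ∧
    (∀ s ∈ I, HasDerivAt (polyLift F x 1) (polyLift F x 3 s * polyLift F x 2 s) s) ∧
    (∀ (i : ℕ), 2 ≤ i → i ≤ k + 1 → ∀ s ∈ I,
      HasDerivAt (polyLift F x i) (-(polyLift F x 1 s * polyLift F x (i + 1) s)) s) ∧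
    (∀ s ∈ I, HasDerivAt (polyLift F x (k + 2)) 0 s) := by
  have hpos : ∀ s ∈ I, 0 < 1 - F.eval (x s) ^ 2 := by
    intro s hs
    have h := hxF s hs
    nlinarith [sq_abs (F.eval (x s)), abs_nonneg (F.eval (x s))]
  have h1 : polyLift F x 1 = fun s => Real.sqrt (1 - F.eval (x s) ^ 2) := by
    funext t; simp [polyLift]
  have h2 : polyLift F x 2 = fun s => F.eval (x s) := by
    funext t; simp [polyLift]
  refine ⟨?_, ?_, ?_, ?_⟩
  · intro s hs
    rw [h1, h2]
    simp only
    rw [Real.sq_sqrt (le_of_lt (hpos s hs))]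
    ring
  · intro s hs
    have hd := hx s hs
    have hFc := polyComp_deriv F x s _ hd
    have hsq := hFc.pow 2
    have hinner := hsq.const_sub 1
    have hsqrt := (Real.hasDerivAt_sqrt (ne_of_gt (hpos s hs))).comp s hinner
    rw [h1]
    refine hsqrt.congr_deriv (Eq.symm ?_)
    have hs0 : Real.sqrt (1 - F.eval (x s) ^ 2) ≠ 0 :=
      ne_of_gt (Real.sqrt_pos.mpr (hpos s hs))
    simp only [polyLift]
    norm_num [Function.iterate_one]
    field_simp
  · intro i h2i hik s hs
    have hd := hx s hs
    rcases eq_or_lt_of_le h2i with hi2 | hi3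
    · subst hi2
      have hFc := polyComp_deriv F x s _ hd
      rw [h2]
      convert hFc using 1
      simp only [polyLift]
      norm_num [Function.iterate_one]
      ring
    · -- i ≥ 3
      have hi3' : 3 ≤ i := hi3
      have hne1 : i ≠ 1 := by omega
      have hne2 : i ≠ 2 := by omega
      have hi1ne1 : i + 1 ≠ 1 := by omega
      have hi1ne2 : i + 1 ≠ 2 := by omega
      have hPi : polyLift F x i =
          fun t => (-1 : ℝ) ^ (i - 2) * ((Polynomial.derivative)^[i - 2] F).eval (x t) := by
        funext t; simp [polyLift, hne1, hne2]
      have hFc := polyComp_deriv ((Polynomial.derivative)^[i - 2] F) x s _ hd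
      have hder := hFc.const_mul ((-1 : ℝ) ^ (i - 2))
      rw [hPi]
      refine hder.congr_deriv (Eq.symm ?_)
      simp only [polyLift, if_neg hne1, if_neg hi1ne1, if_neg hne2, if_neg hi1ne2]
      have hit : (Polynomial.derivative)^[i + 1 - 2] F =
          Polynomial.derivative ((Polynomial.derivative)^[i - 2] F) := by
        have : i + 1 - 2 = (i - 2) + 1 := by omega
        rw [this, Function.iterate_succ_apply']
      rw [hit]
      have hpow : (-1 : ℝ) ^ (i + 1 - 2) = -(-1 : ℝ) ^ (i - 2) := by
        have : i + 1 - 2 = (i - 2) + 1 := by omega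
        rw [this, pow_succ]; ring
      rw [hpow]
      simp only [if_true]
      ring
  · intro s hs
    have hd := hx s hs
    have hne1 : k + 2 ≠ 1 := by omega
    have hne2 : k + 2 ≠ 2 := by omega
    have hPi : polyLift F x (k + 2) =
        fun t => (-1 : ℝ) ^ k * ((Polynomial.derivative)^[k] F).eval (x t) := by
      funext t; simp [polyLift, hne1, hne2, show k ≠ 0 by omega]
    have hFc := polyComp_deriv ((Polynomial.derivative)^[k] F) x s _ hd
    have hder := hFc.const_mul ((-1 : ℝ) ^ k)
    rw [hPi]
    refine hder.congr_deriv (Eq.symm ?_)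
    have hzero : Polynomial.derivative ((Polynomial.derivative)^[k] F) = 0 := by
      rw [← Function.iterate_succ_apply' (⇑Polynomial.derivative) k F]
      exact Polynomial.iterate_derivative_eq_zero (by omega)
    rw [hzero]
    simp
end

section
/- Let F: ℝ → ℝ be continuously differentiable, let x_0 < x_1 be real numbers with |F(y)| ≤ 1 for all y ∈ [x_0,x_1], and suppose there is ε > 0 such that |F(y)| > 1 for all y ∈ (x_0 − ε, x_0) ∪ (x_1, x_1 + ε). Let (x,θ): ℝ → ℝ² be a solution of x' = cos θ, θ' = F'(x) with x(0) ∈ [x_0,x_1] and sin θ(0) = F(x(0)). Then x(s) ∈ [x_0,x_1] for all s ∈ ℝ; that is, the curve is bounded in the x-direction. -/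
/-- let `F` be `C¹` with `|F| ≤ 1` on `[x₀,x₁]` and `|F| > 1` just outside
`[x₀,x₁]` (on `(x₀−ε,x₀) ∪ (x₁,x₁+ε)`).  Then every global solution of the planar
curvature system `x' = cos θ`, `θ' = F'(x)` starting in `[x₀,x₁]` with
`sin θ(0) = F(x(0))` stays in `[x₀,x₁]` for all time: the curve is bounded in the
`x`-direction. -/
theorem stmt_13 (F : ℝ → ℝ) (hF : ContDiff ℝ 1 F)
    (x₀ x₁ : ℝ) (hx01 : x₀ < x₁)
    (hin : ∀ y ∈ Set.Icc x₀ x₁, |F y| ≤ 1)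
    (ε : ℝ) (hε : 0 < ε)
    (hout : ∀ y ∈ Set.Ioo (x₀ - ε) x₀ ∪ Set.Ioo x₁ (x₁ + ε), |F y| > 1)
    (x θ : ℝ → ℝ)
    (hx : ∀ s : ℝ, HasDerivAt x (Real.cos (θ s)) s)
    (hθ : ∀ s : ℝ, HasDerivAt θ (deriv F (x s)) s)
    (h0 : x 0 ∈ Set.Icc x₀ x₁)
    (hsin : Real.sin (θ 0) = F (x 0)) :
    ∀ s : ℝ, x s ∈ Set.Icc x₀ x₁ := by
  have hFd : Differentiable ℝ F := hF.differentiable one_ne_zero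
  -- the conserved quantity
  have hg : ∀ s : ℝ, HasDerivAt (fun s => Real.sin (θ s) - F (x s)) 0 s := by
    intro s
    have h1 : HasDerivAt (fun s => Real.sin (θ s))
        (Real.cos (θ s) * deriv F (x s)) s := (hθ s).sin
    have h2 : HasDerivAt (fun s => F (x s)) (deriv F (x s) * Real.cos (θ s)) s :=
      ((hFd (x s)).hasDerivAt).comp s (hx s)
    have := h1.sub h2
    rw [show Real.cos (θ s) * deriv F (x s) - deriv F (x s) * Real.cos (θ s) = 0 by ring] at this
    exact this
  have hconst : ∀ s : ℝ, Real.sin (θ s) - F (x s) = Real.sin (θ 0) - F (x 0) := by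
    intro s
    have : ∀ t : ℝ, (fun s => Real.sin (θ s) - F (x s)) t =
        (fun s => Real.sin (θ s) - F (x s)) 0 := by
      intro t
      exact is_const_of_deriv_eq_zero (fun u => (hg u).differentiableAt)
        (fun u => (hg u).deriv) t 0
    exact this s
  have key : ∀ s : ℝ, Real.sin (θ s) = F (x s) := by
    intro s
    have := hconst s
    rw [hsin] at this
    linarith
  have hbound : ∀ s : ℝ, |F (x s)| ≤ 1 := by
    intro s; rw [← key s]; exact Real.abs_sin_le_one _
  have hxc : Continuous x :=
    continuous_iff_continuousAt.mpr (fun s => (hx s).continuousAt)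
  intro s
  constructor
  · by_contra h
    push_neg at h
    set c := max (x₀ - ε/2) ((x₀ + x s)/2) with hc
    have hc1 : c < x₀ := by
      apply max_lt <;> [linarith; linarith]
    have hc2 : x₀ - ε < c := by
      have : x₀ - ε < x₀ - ε/2 := by linarith
      exact lt_of_lt_of_le this (le_max_left _ _)
    have hc3 : x s ≤ c := by
      have : x s ≤ (x₀ + x s)/2 := by linarith
      exact le_trans this (le_max_right _ _)
    have hc4 : c ≤ x 0 := le_trans hc1.le h0.1
    have : c ∈ Set.uIcc (x s) (x 0) := Set.mem_uIcc.mpr (Or.inl ⟨hc3, hc4⟩)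
    obtain ⟨t, -, ht⟩ := intermediate_value_uIcc (hxc.continuousOn) this
    have := hout c (Or.inl ⟨hc2, hc1⟩)
    rw [← ht] at this
    exact absurd (hbound t) (not_le.mpr this)
  · by_contra h
    push_neg at h
    set c := min (x₁ + ε/2) ((x₁ + x s)/2) with hc
    have hc1 : x₁ < c := by
      apply lt_min <;> [linarith; linarith]
    have hc2 : c < x₁ + ε := by
      have : x₁ + ε/2 < x₁ + ε := by linarith
      exact lt_of_le_of_lt (min_le_left _ _) this
    have hc3 : c ≤ x s := by
      have : (x₁ + x s)/2 ≤ x s := by linarith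
      exact le_trans (min_le_right _ _) this
    have hc4 : x 0 ≤ c := le_trans h0.2 hc1.le
    have : c ∈ Set.uIcc (x 0) (x s) := Set.mem_uIcc.mpr (Or.inl ⟨hc4, hc3⟩)
    obtain ⟨t, -, ht⟩ := intermediate_value_uIcc (hxc.continuousOn) this
    have := hout c (Or.inr ⟨hc1, hc2⟩)
    rw [← ht] at this
    exact absurd (hbound t) (not_le.mpr this)
end

section
/- Let k ≥ 1, let F be a nonconstant real polynomial of degree at most k, and let x_0 ∈ ℝ with F'(x_0) = 0 and |F(x_0)| ≤ 1. Define constants P_1 = √(1 − F(x_0)²), P_2 = F(x_0), and P_{i+2} = (−1)^i F^{(i)}(x_0) for i = 1,…,k. Then the constant functions P_1,…,P_{k+2} solve the reduced geodesic equations (i.e. the point is an equilibrium of the reduced system) if and only if F(x_0) = 1 or F(x_0) = −1. -/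
/-- The constant momenta associated to a polynomial `F` at a point `x₀` (1-based index):
`P_1 = √(1 − F(x₀)²)`, `P_2 = F(x₀)`, and `P_{i+2} = (−1)^i F^{(i)}(x₀)` for `i ≥ 1`. -/
noncomputable def eqPoint (F : Polynomial ℝ) (x₀ : ℝ) : ℕ → ℝ :=
  fun i =>
    if i = 1 then Real.sqrt (1 - F.eval x₀ ^ 2)
    else if i = 2 then F.eval x₀
    else (-1 : ℝ) ^ (i - 2) * ((Polynomial.derivative)^[i - 2] F).eval x₀

lemma top_deriv_ne (F : Polynomial ℝ) (hnc : F.natDegree ≠ 0) (x₀ : ℝ) :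
    ((Polynomial.derivative)^[F.natDegree] F).eval x₀ ≠ 0 := by
  set n := F.natDegree with hn
  have hF0 : F ≠ 0 := fun h => hnc (by simp [hn, h])
  have hdeg : ((Polynomial.derivative)^[n] F).natDegree ≤ 0 := by
    simpa [← hn] using F.natDegree_iterate_derivative n
  have hC := Polynomial.eq_C_of_natDegree_le_zero hdeg
  have hcoeff : ((Polynomial.derivative)^[n] F).coeff 0 =
      (n.descFactorial n : ℝ) * F.coeff n := by
    rw [Polynomial.coeff_iterate_derivative]
    simp [nsmul_eq_mul]
  rw [hC, Polynomial.eval_C, hcoeff]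
  have h1 : F.coeff n ≠ 0 := Polynomial.leadingCoeff_ne_zero.mpr hF0
  have h2 : (n.descFactorial n : ℝ) ≠ 0 := by
    rw [Nat.descFactorial_self]; exact_mod_cast n.factorial_ne_zero
  exact mul_ne_zero h2 h1

/-- for a nonconstant polynomial `F` of degree at most `k` with
`F'(x₀) = 0` and `|F(x₀)| ≤ 1`, the constant functions with values
`P_1 = √(1 − F(x₀)²)`, `P_2 = F(x₀)`, `P_{i+2} = (−1)^i F^{(i)}(x₀)` solve the reduced
geodesic equations (i.e. give an equilibrium of the reduced system) if and only if
`F(x₀) = 1` or `F(x₀) = −1`. -/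
theorem stmt_15 (k : ℕ) (hk : 1 ≤ k) (F : Polynomial ℝ)
    (hdeg : F.natDegree ≤ k) (hnc : F.natDegree ≠ 0)
    (x₀ : ℝ) (hcrit : F.derivative.eval x₀ = 0) (hbd : |F.eval x₀| ≤ 1) :
    ReducedGeodesic k (fun i _ => eqPoint F x₀ i) ↔
      (F.eval x₀ = 1 ∨ F.eval x₀ = -1) := by
  constructor
  · rintro ⟨-, h2, -⟩
    by_contra hne
    push_neg at hne
    obtain ⟨hne1, hne2⟩ := hne
    have hlt : F.eval x₀ ^ 2 < 1 := by
      rcases lt_or_eq_of_le hbd with h | h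
      · nlinarith [abs_nonneg (F.eval x₀), sq_abs (F.eval x₀), abs_le.mp hbd]
      · exfalso
        rcases abs_eq (by norm_num : (0:ℝ) ≤ 1) |>.mp h with h' | h'
        · exact hne1 h'
        · exact hne2 h'
    have hP1 : eqPoint F x₀ 1 > 0 := by
      simp only [eqPoint, if_pos rfl]
      exact Real.sqrt_pos.mpr (by linarith)
    -- use equation with i = natDegree + 1
    set n := F.natDegree with hn
    have hn1 : 1 ≤ n := Nat.one_le_iff_ne_zero.mpr hnc
    have hi := h2 (n + 1) (by omega) (by omega) 0
    have hconst : HasDerivAt (fun _ : ℝ => eqPoint F x₀ (n + 1)) 0 0 := hasDerivAt_const _ _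
    have hzero : -(eqPoint F x₀ 1 * eqPoint F x₀ (n + 1 + 1)) = 0 :=
      hi.unique hconst
    have : eqPoint F x₀ (n + 2) = 0 := by
      have := neg_eq_zero.mp hzero
      rcases mul_eq_zero.mp this with h | h
      · linarith
      · simpa using h
    have hval : eqPoint F x₀ (n + 2) =
        (-1 : ℝ) ^ n * ((Polynomial.derivative)^[n] F).eval x₀ := by
      simp only [eqPoint]
      rw [if_neg (by omega), if_neg (by omega)]
      congr 2 <;> omega
    rw [hval] at this
    have := top_deriv_ne F hnc x₀
    rcases mul_eq_zero.mp ‹(-1 : ℝ) ^ n * _ = 0› with h | h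
    · exact absurd h (by positivity)
    · exact this h
  · intro h
    have hsq : F.eval x₀ ^ 2 = 1 := by rcases h with h | h <;> rw [h] <;> norm_num
    have hP1 : eqPoint F x₀ 1 = 0 := by
      simp only [eqPoint, if_pos rfl]
      rw [hsq]; simp
    have hP3 : eqPoint F x₀ 3 = 0 := by
      simp only [eqPoint]
      norm_num
      exact hcrit
    refine ⟨fun s => ?_, fun i _ _ s => ?_, fun s => hasDerivAt_const _ _⟩
    · have : eqPoint F x₀ 3 * eqPoint F x₀ 2 = 0 := by rw [hP3]; ring
      rw [this]; exact hasDerivAt_const _ _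
    · have : -(eqPoint F x₀ 1 * eqPoint F x₀ (i + 1)) = 0 := by rw [hP1]; ring
      rw [this]; exact hasDerivAt_const _ _
end
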